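/- Fix ε ∈ (0, 1/n) and let D_{n,ε} be the set of n×n density matrices ρ with ρ − εI positive semidefinite. Let Γ ⊆ D_{n,ε} be nonempty, convex, and compact. Then for the quantum log loss L_log(ρ,σ) := −Tr(ρ log σ): (i) inf_{σ ∈ D_{n,ε}} sup_{ρ ∈ Γ} L_log(ρ,σ) = sup_{ρ ∈ Γ} inf_{σ ∈ D_{n,ε}} L_log(ρ,σ) = sup_{ρ ∈ Γ} S(ρ); and (ii) there exists a saddle point (ρ*, σ*) ∈ Γ × D_{n,ε} of L_log such that ρ* maximizes the von Neumann entropy S over Γ and S(ρ*) equals the minimax value. -/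

import Mathlib

open Matrix

/-- The matrix logarithm of a real symmetric matrix, defined by applying `Real.log` to
the eigenvalues in a spectral decomposition (junk value `0` for non-Hermitian input). -/
noncomputable def matLog {n : ℕ} (A : Matrix (Fin n) (Fin n) ℝ) :
    Matrix (Fin n) (Fin n) ℝ :=
  if h : A.IsHermitian then h.cfc Real.log else 0

/-- The von Neumann entropy `S(ρ) := −∑ᵢ λᵢ log λᵢ` of a real symmetric matrix `ρ` with
eigenvalues `λᵢ`, with the convention `0 · log 0 = 0` (note `Real.log 0 = 0`). Junk value
`0` for non-Hermitian input. -/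
noncomputable def vnEntropy {n : ℕ} (ρ : Matrix (Fin n) (Fin n) ℝ) : ℝ :=
  if h : ρ.IsHermitian then -∑ i, h.eigenvalues i * Real.log (h.eigenvalues i) else 0

/-- `D_{n,ε}`: the set of n×n density matrices ρ (real symmetric PSD, trace 1) with
ρ − εI positive semidefinite. -/
def Dset (n : ℕ) (ε : ℝ) : Set (Matrix (Fin n) (Fin n) ℝ) :=
  {ρ | ρ.PosSemidef ∧ ρ.trace = 1 ∧ (ρ - ε • 1).PosSemidef}

variable {n : ℕ} {A B : Matrix (Fin n) (Fin n) ℝ}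

lemma ofReal_id : (RCLike.ofReal : ℝ → ℝ) = id := by ext x; simp

lemma mcfc_def (hA : A.IsHermitian) (f : ℝ → ℝ) :
    hA.cfc f = (hA.eigenvectorUnitary : Matrix (Fin n) (Fin n) ℝ) * diagonal (f ∘ hA.eigenvalues)
      * star (hA.eigenvectorUnitary : Matrix (Fin n) (Fin n) ℝ) := by
  simp [Matrix.IsHermitian.cfc, ofReal_id, Function.id_comp]

lemma spectral (hA : A.IsHermitian) :
    A = (hA.eigenvectorUnitary : Matrix (Fin n) (Fin n) ℝ) * diagonal (hA.eigenvalues)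
      * star (hA.eigenvectorUnitary : Matrix (Fin n) (Fin n) ℝ) := by
  conv_lhs => rw [hA.spectral_theorem]
  simp [ofReal_id, Function.id_comp]

lemma mcfc_id (hA : A.IsHermitian) : hA.cfc (fun x => x) = A := by
  rw [mcfc_def]; exact (spectral hA).symm

lemma trace_diag_W (d e : Fin n → ℝ) (W : Matrix (Fin n) (Fin n) ℝ) :
    (diagonal d * W * diagonal e * star W).trace
      = ∑ i, ∑ j, d i * e j * (W i j)^2 := by
  have h1 : ∀ i j, (diagonal d * W * diagonal e) i j = d i * W i j * e j := by
    intro i j; simp [Matrix.mul_diagonal, Matrix.diagonal_mul]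
  simp only [Matrix.trace, Matrix.diag, Matrix.mul_apply, h1, Matrix.star_apply, star_trivial]
  refine Finset.sum_congr rfl fun i _ => Finset.sum_congr rfl fun j _ => by ring

/-- The overlap matrix. -/
noncomputable def Wmat (hB : B.IsHermitian) (hA : A.IsHermitian) : Matrix (Fin n) (Fin n) ℝ :=
  star (hB.eigenvectorUnitary : Matrix (Fin n) (Fin n) ℝ) *
    (hA.eigenvectorUnitary : Matrix (Fin n) (Fin n) ℝ)

lemma Wmat_mul_star (hB : B.IsHermitian) (hA : A.IsHermitian) :
    Wmat hB hA * star (Wmat hB hA) = 1 := by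
  simp only [Wmat, Matrix.star_mul, star_star]
  calc star (hB.eigenvectorUnitary : Matrix (Fin n) (Fin n) ℝ) *
        (hA.eigenvectorUnitary : Matrix (Fin n) (Fin n) ℝ) *
        (star (hA.eigenvectorUnitary : Matrix (Fin n) (Fin n) ℝ) *
        (hB.eigenvectorUnitary : Matrix (Fin n) (Fin n) ℝ))
      = star (hB.eigenvectorUnitary : Matrix (Fin n) (Fin n) ℝ) *
        ((hA.eigenvectorUnitary : Matrix (Fin n) (Fin n) ℝ) *
        star (hA.eigenvectorUnitary : Matrix (Fin n) (Fin n) ℝ)) *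
        (hB.eigenvectorUnitary : Matrix (Fin n) (Fin n) ℝ) := by
        simp only [mul_assoc]
    _ = 1 := by
        rw [Unitary.mul_star_self_of_mem (SetLike.coe_mem _), mul_one, Unitary.star_mul_self_of_mem (SetLike.coe_mem _)]

lemma star_Wmat_mul (hB : B.IsHermitian) (hA : A.IsHermitian) :
    star (Wmat hB hA) * Wmat hB hA = 1 := by
  simp only [Wmat, Matrix.star_mul, star_star]
  calc star (hA.eigenvectorUnitary : Matrix (Fin n) (Fin n) ℝ) *
        (hB.eigenvectorUnitary : Matrix (Fin n) (Fin n) ℝ) *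
        (star (hB.eigenvectorUnitary : Matrix (Fin n) (Fin n) ℝ) *
        (hA.eigenvectorUnitary : Matrix (Fin n) (Fin n) ℝ))
      = star (hA.eigenvectorUnitary : Matrix (Fin n) (Fin n) ℝ) *
        ((hB.eigenvectorUnitary : Matrix (Fin n) (Fin n) ℝ) *
        star (hB.eigenvectorUnitary : Matrix (Fin n) (Fin n) ℝ)) *
        (hA.eigenvectorUnitary : Matrix (Fin n) (Fin n) ℝ) := by
        simp only [mul_assoc]
    _ = 1 := by
        rw [Unitary.mul_star_self_of_mem (SetLike.coe_mem _), mul_one, Unitary.star_mul_self_of_mem (SetLike.coe_mem _)]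

lemma Wmat_rowsum (hB : B.IsHermitian) (hA : A.IsHermitian) (i : Fin n) :
    ∑ j, (Wmat hB hA i j)^2 = 1 := by
  have := congrFun (congrFun (Wmat_mul_star hB hA) i) i
  simp only [Matrix.mul_apply, Matrix.star_apply, star_trivial, Matrix.one_apply_eq] at this
  rw [← this]
  exact Finset.sum_congr rfl fun j _ => (sq _)

lemma Wmat_colsum (hB : B.IsHermitian) (hA : A.IsHermitian) (j : Fin n) :
    ∑ i, (Wmat hB hA i j)^2 = 1 := by
  have := congrFun (congrFun (star_Wmat_mul hB hA) j) j
  simp only [Matrix.mul_apply, Matrix.star_apply, star_trivial, Matrix.one_apply_eq] at this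
  rw [← this]
  exact Finset.sum_congr rfl fun i _ => by rw [sq, mul_comm]

/-- Master trace pairing formula. -/
lemma trace_cfc_mul_cfc (hB : B.IsHermitian) (hA : A.IsHermitian) (f g : ℝ → ℝ) :
    (hB.cfc f * hA.cfc g).trace
      = ∑ i, ∑ j, f (hB.eigenvalues i) * g (hA.eigenvalues j) * (Wmat hB hA i j)^2 := by
  set V := (hB.eigenvectorUnitary : Matrix (Fin n) (Fin n) ℝ)
  set U := (hA.eigenvectorUnitary : Matrix (Fin n) (Fin n) ℝ)
  set D := diagonal (f ∘ hB.eigenvalues)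
  set E := diagonal (g ∘ hA.eigenvalues)
  rw [mcfc_def hB f, mcfc_def hA g]
  have h1 : (V * D * star V) * (U * E * star U) = V * (D * (star V * U) * E * star U) := by
    simp only [mul_assoc]
  rw [h1, Matrix.trace_mul_comm]
  have h2 : D * (star V * U) * E * star U * V = D * Wmat hB hA * E * star (Wmat hB hA) := by
    simp only [Wmat, Matrix.star_mul, star_star, mul_assoc]
    rfl
  rw [h2, trace_diag_W]
  rfl

lemma trace_cfc (hA : A.IsHermitian) (g : ℝ → ℝ) :
    (hA.cfc g).trace = ∑ j, g (hA.eigenvalues j) := by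
  rw [mcfc_def hA g, Matrix.trace_mul_comm, ← mul_assoc, Unitary.star_mul_self_of_mem (SetLike.coe_mem _), one_mul,
    Matrix.trace_diagonal]
  rfl

lemma mcfc_sub (hA : A.IsHermitian) (f g : ℝ → ℝ) :
    hA.cfc (fun x => f x - g x) = hA.cfc f - hA.cfc g := by
  rw [mcfc_def, mcfc_def, mcfc_def]
  have hd : diagonal ((fun x => f x - g x) ∘ hA.eigenvalues)
      = diagonal (f ∘ hA.eigenvalues) - diagonal (g ∘ hA.eigenvalues) := by
    ext i j; by_cases h : i = j <;> simp [Matrix.diagonal, h]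
  rw [hd, Matrix.mul_sub, Matrix.sub_mul]

lemma mcfc_mul (hA : A.IsHermitian) (f g : ℝ → ℝ) :
    hA.cfc (fun x => f x * g x) = hA.cfc f * hA.cfc g := by
  rw [mcfc_def, mcfc_def, mcfc_def]
  have h : ∀ (X Y : Matrix (Fin n) (Fin n) ℝ),
      (hA.eigenvectorUnitary : Matrix (Fin n) (Fin n) ℝ) * X *
        star (hA.eigenvectorUnitary : Matrix (Fin n) (Fin n) ℝ) *
        ((hA.eigenvectorUnitary : Matrix (Fin n) (Fin n) ℝ) * Y *
          star (hA.eigenvectorUnitary : Matrix (Fin n) (Fin n) ℝ))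
      = (hA.eigenvectorUnitary : Matrix (Fin n) (Fin n) ℝ) * (X *
          (star (hA.eigenvectorUnitary : Matrix (Fin n) (Fin n) ℝ) *
           (hA.eigenvectorUnitary : Matrix (Fin n) (Fin n) ℝ)) * Y) *
          star (hA.eigenvectorUnitary : Matrix (Fin n) (Fin n) ℝ) := by
    intro X Y; simp only [mul_assoc]
  rw [h, Unitary.star_mul_self_of_mem (SetLike.coe_mem _), mul_one, diagonal_mul_diagonal]
  rfl

lemma mcfc_const (hA : A.IsHermitian) (c : ℝ) :
    hA.cfc (fun _ => c) = c • (1 : Matrix (Fin n) (Fin n) ℝ) := by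
  rw [mcfc_def]
  have : diagonal ((fun _ => c) ∘ hA.eigenvalues) = c • (1 : Matrix (Fin n) (Fin n) ℝ) := by
    ext i j; by_cases h : i = j <;> simp [diagonal, Matrix.one_apply, h]
  rw [this]
  rw [Matrix.mul_smul, Matrix.smul_mul, mul_one, Unitary.mul_star_self_of_mem (SetLike.coe_mem _)]

lemma mcfc_add (hA : A.IsHermitian) (f g : ℝ → ℝ) :
    hA.cfc (fun x => f x + g x) = hA.cfc f + hA.cfc g := by
  rw [mcfc_def, mcfc_def, mcfc_def]
  have hd : diagonal ((fun x => f x + g x) ∘ hA.eigenvalues)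
      = diagonal (f ∘ hA.eigenvalues) + diagonal (g ∘ hA.eigenvalues) := by
    ext i j; by_cases h : i = j <;> simp [Matrix.diagonal, h]
  rw [hd, Matrix.mul_add, Matrix.add_mul]

lemma mcfc_aeval (hA : A.IsHermitian) (p : Polynomial ℝ) :
    hA.cfc (fun x => p.eval x) = Polynomial.aeval A p := by
  induction p using Polynomial.induction_on with
  | C c => simp only [Polynomial.eval_C, Polynomial.aeval_C, mcfc_const,
      Algebra.algebraMap_eq_smul_one]
  | add p q hp hq =>
      have : (fun x => (p + q).eval x) = fun x => p.eval x + q.eval x := by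
        ext x; simp
      rw [this, mcfc_add, hp, hq, map_add]
  | monomial k c ih =>
      have : (fun x => (Polynomial.C c * Polynomial.X ^ (k+1)).eval x)
          = fun x => (Polynomial.C c * Polynomial.X ^ k).eval x * x := by
        ext x; simp [pow_succ, mul_assoc]
      rw [this, mcfc_mul, ih, mcfc_id, pow_succ, ← mul_assoc]
      simp [_root_.map_mul]


lemma trace_eq_sum_eig (hA : A.IsHermitian) : A.trace = ∑ i, hA.eigenvalues i := by
  conv_lhs => rw [← mcfc_id hA]
  rw [trace_cfc]

lemma Dset_eig_lower {ε : ℝ} {ρ : Matrix (Fin n) (Fin n) ℝ} (hρ : ρ ∈ Dset n ε) (i : Fin n) :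
    ε ≤ hρ.1.1.eigenvalues i := by
  have hH := hρ.1.1
  set v : Fin n → ℝ := ⇑(hH.eigenvectorBasis i) with hv
  have hv0 : v ≠ 0 := by
    intro h
    have h1 := hH.eigenvectorBasis.orthonormal.1 i
    rw [show (hH.eigenvectorBasis i) = 0 from by ext j; exact congrFun h j] at h1
    simp at h1
  have hvv : 0 < v ⬝ᵥ v := by
    rcases lt_or_eq_of_le (Finset.sum_nonneg fun j _ => mul_self_nonneg (v j) : (0:ℝ) ≤ v ⬝ᵥ v) with h | h
    · exact h
    · exact absurd (dotProduct_self_eq_zero.mp h.symm) hv0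
  have hps := hρ.2.2.dotProduct_mulVec_nonneg v
  have hmv : (ρ - ε • 1) *ᵥ v = (hH.eigenvalues i - ε) • v := by
    rw [Matrix.sub_mulVec, Matrix.smul_mulVec, Matrix.one_mulVec,
      hH.mulVec_eigenvectorBasis, sub_smul]
  rw [hmv] at hps
  have : star v = v := by ext j; simp
  rw [this, dotProduct_smul, smul_eq_mul] at hps
  nlinarith

lemma Dset_eig_upper {ε : ℝ} (hε : 0 < ε) {ρ : Matrix (Fin n) (Fin n) ℝ}
    (hρ : ρ ∈ Dset n ε) (i : Fin n) : hρ.1.1.eigenvalues i ≤ 1 := by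
  have hsum : ∑ j, hρ.1.1.eigenvalues j = 1 := by
    rw [← trace_eq_sum_eig hρ.1.1, hρ.2.1]
  calc hρ.1.1.eigenvalues i ≤ ∑ j, hρ.1.1.eigenvalues j :=
        Finset.single_le_sum (fun j _ => (hρ.1.eigenvalues_nonneg j)) (Finset.mem_univ i)
    _ = 1 := hsum



lemma matLog_eq (hA : A.IsHermitian) : matLog A = hA.cfc Real.log := dif_pos hA

lemma vnEntropy_eq' (hA : A.IsHermitian) :
    vnEntropy A = -∑ i, hA.eigenvalues i * Real.log (hA.eigenvalues i) := dif_pos hA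

lemma trace_mul_matLog (hB : B.IsHermitian) (hA : A.IsHermitian) :
    (B * matLog A).trace = ∑ i, ∑ j, hB.eigenvalues i * Real.log (hA.eigenvalues j)
      * (Wmat hB hA i j)^2 := by
  rw [matLog_eq hA]
  conv_lhs => rw [← mcfc_id hB]
  exact trace_cfc_mul_cfc hB hA _ _

lemma Wmat_self (hA hA' : A.IsHermitian) : Wmat hA hA' = 1 := by
  have : hA' = hA := rfl
  rw [this]
  exact Unitary.star_mul_self_of_mem (SetLike.coe_mem _)

lemma trace_mul_matLog_self (hA : A.IsHermitian) :
    (A * matLog A).trace = ∑ i, hA.eigenvalues i * Real.log (hA.eigenvalues i) := by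
  rw [trace_mul_matLog hA hA, ]
  rw [Wmat_self hA hA]
  refine Finset.sum_congr rfl fun i _ => ?_
  rw [Finset.sum_eq_single i]
  · simp [Matrix.one_apply]
  · intro j _ hj
    simp [Matrix.one_apply, Ne.symm hj]
  · simp

lemma vnEntropy_eq_trace (hA : A.IsHermitian) : vnEntropy A = -(A * matLog A).trace := by
  rw [vnEntropy_eq' hA, trace_mul_matLog_self hA]

section Klein
variable {ε : ℝ} {ρ σ : Matrix (Fin n) (Fin n) ℝ}

lemma klein (hε : 0 < ε) (hρ : ρ ∈ Dset n ε) (hσ : σ ∈ Dset n ε) :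
    vnEntropy ρ ≤ -(ρ * matLog σ).trace := by
  have hR := hρ.1.1
  have hS := hσ.1.1
  set lam := hR.eigenvalues with hlam
  set mu := hS.eigenvalues with hmu
  set c : Fin n → Fin n → ℝ := fun i j => (Wmat hR hS i j)^2 with hc
  have hc0 : ∀ i j, 0 ≤ c i j := fun i j => sq_nonneg _
  have hrow : ∀ i, ∑ j, c i j = 1 := Wmat_rowsum hR hS
  have hcol : ∀ j, ∑ i, c i j = 1 := Wmat_colsum hR hS
  have hlam_lb : ∀ i, ε ≤ lam i := Dset_eig_lower hρ
  have hmu_lb : ∀ j, ε ≤ mu j := Dset_eig_lower hσ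
  set r : Fin n → ℝ := fun i => ∑ j, c i j * mu j with hr
  have hr_lb : ∀ i, ε ≤ r i := by
    intro i
    calc ε = ∑ j, c i j * ε := by rw [← Finset.sum_mul, hrow, one_mul]
    _ ≤ ∑ j, c i j * mu j := Finset.sum_le_sum fun j _ => by
          exact mul_le_mul_of_nonneg_left (hmu_lb j) (hc0 i j)
  have hsum_r : ∑ i, r i = 1 := by
    rw [hr]
    rw [Finset.sum_comm]
    have : ∀ j, ∑ i, c i j * mu j = mu j := by
      intro j; rw [← Finset.sum_mul, hcol, one_mul]
    rw [Finset.sum_congr rfl fun j _ => this j]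
    rw [← trace_eq_sum_eig hS, hσ.2.1]
  have hsum_lam : ∑ i, lam i = 1 := by rw [← trace_eq_sum_eig hR, hρ.2.1]
  -- Jensen
  have jensen : ∀ i, ∑ j, c i j * Real.log (mu j) ≤ Real.log (r i) := by
    intro i
    have := (strictConcaveOn_log_Ioi.concaveOn).le_map_sum
      (t := Finset.univ) (w := c i) (p := mu)
      (fun j _ => hc0 i j) (hrow i) (fun j _ => lt_of_lt_of_le hε (hmu_lb j))
    simpa [smul_eq_mul] using this
  -- Gibbs
  have gibbs : ∀ i, lam i * Real.log (r i) - lam i * Real.log (lam i) ≤ r i - lam i := by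
    intro i
    have hlpos : 0 < lam i := lt_of_lt_of_le hε (hlam_lb i)
    have hrpos : 0 < r i := lt_of_lt_of_le hε (hr_lb i)
    have h1 : Real.log (r i) - Real.log (lam i) ≤ r i / lam i - 1 := by
      rw [← Real.log_div (ne_of_gt hrpos) (ne_of_gt hlpos)]
      exact Real.log_le_sub_one_of_pos (by positivity)
    calc lam i * Real.log (r i) - lam i * Real.log (lam i)
        = lam i * (Real.log (r i) - Real.log (lam i)) := by ring
      _ ≤ lam i * (r i / lam i - 1) := mul_le_mul_of_nonneg_left h1 hlpos.le
      _ = r i - lam i := by field_simp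
  rw [vnEntropy_eq' hR, trace_mul_matLog hR hS]
  rw [neg_le_neg_iff]
  calc ∑ i, ∑ j, lam i * Real.log (mu j) * c i j
      = ∑ i, lam i * ∑ j, c i j * Real.log (mu j) := by
        refine Finset.sum_congr rfl fun i _ => ?_
        rw [Finset.mul_sum]
        exact Finset.sum_congr rfl fun j _ => by ring
    _ ≤ ∑ i, lam i * Real.log (r i) := Finset.sum_le_sum fun i _ =>
        mul_le_mul_of_nonneg_left (jensen i) (le_trans hε.le (hlam_lb i))
    _ ≤ ∑ i, (lam i * Real.log (lam i) + (r i - lam i)) := Finset.sum_le_sum fun i _ => by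
        have := gibbs i; linarith
    _ = ∑ i, lam i * Real.log (lam i) := by
        rw [Finset.sum_add_distrib, Finset.sum_sub_distrib, hsum_r, hsum_lam]; ring

lemma L_nonneg (hε : 0 < ε) (hρ : ρ ∈ Dset n ε) (hσ : σ ∈ Dset n ε) :
    0 ≤ -(ρ * matLog σ).trace := by
  rw [trace_mul_matLog hρ.1.1 hσ.1.1, neg_nonneg]
  refine Finset.sum_nonpos fun i _ => Finset.sum_nonpos fun j _ => ?_
  have h1 : 0 ≤ hρ.1.1.eigenvalues i := hρ.1.eigenvalues_nonneg i
  have h2 : Real.log (hσ.1.1.eigenvalues j) ≤ 0 :=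
    Real.log_nonpos (le_trans hε.le (Dset_eig_lower hσ j)) (Dset_eig_upper hε hσ j)
  have h3 : (0:ℝ) ≤ (Wmat hρ.1.1 hσ.1.1 i j)^2 := sq_nonneg _
  exact mul_nonpos_of_nonpos_of_nonneg (mul_nonpos_of_nonneg_of_nonpos h1 h2) h3

lemma L_le (hε : 0 < ε) (hρ : ρ ∈ Dset n ε) (hσ : σ ∈ Dset n ε) :
    -(ρ * matLog σ).trace ≤ -Real.log ε := by
  rw [trace_mul_matLog hρ.1.1 hσ.1.1]
  have key : ∑ i, ∑ j, hρ.1.1.eigenvalues i * Real.log (hσ.1.1.eigenvalues j)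
      * (Wmat hρ.1.1 hσ.1.1 i j)^2 ≥ ∑ i, ∑ j, hρ.1.1.eigenvalues i * Real.log ε
      * (Wmat hρ.1.1 hσ.1.1 i j)^2 := by
    refine Finset.sum_le_sum fun i _ => Finset.sum_le_sum fun j _ => ?_
    have h1 : 0 ≤ hρ.1.1.eigenvalues i := hρ.1.eigenvalues_nonneg i
    have h2 : Real.log ε ≤ Real.log (hσ.1.1.eigenvalues j) :=
      Real.log_le_log hε (Dset_eig_lower hσ j)
    have h3 : (0:ℝ) ≤ (Wmat hρ.1.1 hσ.1.1 i j)^2 := sq_nonneg _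
    exact mul_le_mul_of_nonneg_right (mul_le_mul_of_nonneg_left h2 h1) h3
  have base : ∑ i, ∑ j, hρ.1.1.eigenvalues i * Real.log ε
      * (Wmat hρ.1.1 hσ.1.1 i j)^2 = Real.log ε := by
    have : ∀ i, ∑ j, hρ.1.1.eigenvalues i * Real.log ε * (Wmat hρ.1.1 hσ.1.1 i j)^2
        = hρ.1.1.eigenvalues i * Real.log ε := by
      intro i
      rw [← Finset.mul_sum, Wmat_rowsum, mul_one]
    rw [Finset.sum_congr rfl fun i _ => this i, ← Finset.sum_mul,
      ← trace_eq_sum_eig hρ.1.1, hρ.2.1, one_mul]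
  linarith

lemma vnEntropy_nonneg (hε : 0 < ε) (hρ : ρ ∈ Dset n ε) : 0 ≤ vnEntropy ρ := by
  rw [vnEntropy_eq' hρ.1.1, neg_nonneg]
  refine Finset.sum_nonpos fun i _ => ?_
  exact mul_nonpos_of_nonneg_of_nonpos (hρ.1.eigenvalues_nonneg i)
    (Real.log_nonpos (le_trans hε.le (Dset_eig_lower hρ i)) (Dset_eig_upper hε hρ i))

end Klein

section Continuity
variable {ε : ℝ}

lemma abs_trace_mul_cfc_le (hB : B.IsHermitian) (hA : A.IsHermitian) (g : ℝ → ℝ) (η : ℝ)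
    (hg : ∀ i, |g (hA.eigenvalues i)| ≤ η) :
    |(B * hA.cfc g).trace| ≤ (∑ i, |hB.eigenvalues i|) * η := by
  conv_lhs => rw [show B * hA.cfc g = hB.cfc (fun x => x) * hA.cfc g by rw [mcfc_id],
    trace_cfc_mul_cfc hB hA]
  calc |∑ i, ∑ j, hB.eigenvalues i * g (hA.eigenvalues j) * (Wmat hB hA i j)^2|
      ≤ ∑ i, |∑ j, hB.eigenvalues i * g (hA.eigenvalues j) * (Wmat hB hA i j)^2| :=
        Finset.abs_sum_le_sum_abs _ _
    _ ≤ ∑ i, ∑ j, |hB.eigenvalues i * g (hA.eigenvalues j) * (Wmat hB hA i j)^2| :=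
        Finset.sum_le_sum fun i _ => Finset.abs_sum_le_sum_abs _ _
    _ ≤ ∑ i, ∑ j, |hB.eigenvalues i| * η * (Wmat hB hA i j)^2 := by
        refine Finset.sum_le_sum fun i _ => Finset.sum_le_sum fun j _ => ?_
        rw [abs_mul, abs_mul, abs_of_nonneg (sq_nonneg (Wmat hB hA i j))]
        refine mul_le_mul_of_nonneg_right ?_ (sq_nonneg _)
        exact mul_le_mul_of_nonneg_left (hg j) (abs_nonneg _)
    _ = (∑ i, |hB.eigenvalues i|) * η := by
        rw [Finset.sum_mul]
        refine Finset.sum_congr rfl fun i _ => ?_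
        rw [← Finset.mul_sum, Wmat_rowsum, mul_one]

lemma dset_herm {ρ : Matrix (Fin n) (Fin n) ℝ} (hρ : ρ ∈ Dset n ε) : ρ.IsHermitian := hρ.1.1

/-- Continuity of `A ↦ Tr(B · log A)` on `D_{n,ε}`. -/
lemma cont_trace_mul_matLog (hε : 0 < ε) (hε1 : ε ≤ 1) (B : Matrix (Fin n) (Fin n) ℝ)
    (hB : B.IsHermitian) :
    ContinuousOn (fun A => (B * matLog A).trace) (Dset n ε) := by
  set C : ℝ := (∑ i, |hB.eigenvalues i|) + 1 with hC
  have hCpos : 0 < C := by positivity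
  -- choose approximating polynomials
  have hlogc : ContinuousOn Real.log (Set.Icc ε 1) :=
    Real.continuousOn_log.mono (fun x hx => by
      simp only [Set.mem_compl_iff, Set.mem_singleton_iff]
      intro h; rw [h] at hx; exact absurd hx.1 (not_le.mpr hε))
  have hex : ∀ k : ℕ, ∃ p : Polynomial ℝ,
      ∀ x ∈ Set.Icc ε 1, |p.eval x - Real.log x| < 1/(k+1) := fun k =>
    exists_polynomial_near_of_continuousOn ε 1 Real.log hlogc _ (by positivity)
  choose p hp using hex
  have key : TendstoUniformlyOn (fun k A => (B * Polynomial.aeval A (p k)).trace)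
      (fun A => (B * matLog A).trace) Filter.atTop (Dset n ε) := by
    rw [Metric.tendstoUniformlyOn_iff]
    intro δ hδ
    obtain ⟨N, hN⟩ := exists_nat_gt (C / δ)
    refine Filter.eventually_atTop.mpr ⟨N, fun k hk A hA => ?_⟩
    have hherm := dset_herm hA
    rw [Real.dist_eq]
    have hdiff : (B * matLog A).trace - (B * Polynomial.aeval A (p k)).trace
        = (B * hherm.cfc (fun x => Real.log x - (p k).eval x)).trace := by
      rw [mcfc_sub, Matrix.mul_sub, Matrix.trace_sub, matLog_eq hherm, mcfc_aeval]
    rw [hdiff]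
    have hbound := abs_trace_mul_cfc_le hB hherm (fun x => Real.log x - (p k).eval x)
      (1/(k+1)) (fun i => by
        rw [abs_sub_comm]
        exact le_of_lt (hp k (hherm.eigenvalues i)
          ⟨Dset_eig_lower hA i, Dset_eig_upper hε hA i⟩))
    refine lt_of_le_of_lt hbound ?_
    have h1 : (∑ i, |hB.eigenvalues i|) * (1/((k:ℝ)+1)) ≤ C * (1/((k:ℝ)+1)) := by
      refine mul_le_mul_of_nonneg_right ?_ (by positivity)
      simp [hC]
    refine lt_of_le_of_lt h1 ?_
    rw [mul_one_div, div_lt_iff₀ (by positivity)]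
    have hNk : (C / δ) < (k:ℝ) + 1 := lt_of_lt_of_le hN (by exact_mod_cast le_trans hk (Nat.le_succ k))
    calc C = (C / δ) * δ := by field_simp
      _ < ((k:ℝ)+1) * δ := by exact mul_lt_mul_of_pos_right hNk hδ
      _ = δ * ((k:ℝ)+1) := mul_comm _ _
  refine key.continuousOn (Filter.Frequently.of_forall fun k => ?_)
  exact ((continuous_const.matrix_mul ((p k).continuous_aeval)).matrix_trace).continuousOn

/-- Continuity of the von Neumann entropy on `D_{n,ε}`. -/
lemma cont_vnEntropy (hε : 0 < ε) (hε1 : ε ≤ 1) :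
    ContinuousOn (vnEntropy (n := n)) (Dset n ε) := by
  have hfc : ContinuousOn (fun x : ℝ => x * Real.log x) (Set.Icc ε 1) :=
    continuousOn_id.mul (Real.continuousOn_log.mono (fun x hx => by
      simp only [Set.mem_compl_iff, Set.mem_singleton_iff]
      intro h; rw [h] at hx; exact absurd hx.1 (not_le.mpr hε)))
  have hex : ∀ k : ℕ, ∃ p : Polynomial ℝ,
      ∀ x ∈ Set.Icc ε 1, |p.eval x - x * Real.log x| < 1/(k+1) := fun k =>
    exists_polynomial_near_of_continuousOn ε 1 _ hfc _ (by positivity)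
  choose p hp using hex
  have hform : ∀ {ρ : Matrix (Fin n) (Fin n) ℝ} (hρ : ρ ∈ Dset n ε),
      vnEntropy ρ = -(((dset_herm hρ).cfc (fun x => x * Real.log x)).trace) := by
    intro ρ hρ
    rw [vnEntropy_eq' (dset_herm hρ), trace_cfc]
  have key : TendstoUniformlyOn (fun k A => -(Polynomial.aeval A (p k)).trace)
      (vnEntropy (n := n)) Filter.atTop (Dset n ε) := by
    rw [Metric.tendstoUniformlyOn_iff]
    intro δ hδ
    obtain ⟨N, hN⟩ := exists_nat_gt ((n:ℝ) / δ)
    refine Filter.eventually_atTop.mpr ⟨N, fun k hk A hA => ?_⟩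
    have hherm := dset_herm hA
    rw [Real.dist_eq, hform hA]
    have : -((hherm.cfc fun x => x * Real.log x).trace) - -(Polynomial.aeval A (p k)).trace
        = -((hherm.cfc (fun x => x * Real.log x - (p k).eval x)).trace) := by
      rw [mcfc_sub, Matrix.trace_sub, ← mcfc_aeval hherm]
      ring
    rw [this, abs_neg]
    have htr : (hherm.cfc (fun x => x * Real.log x - (p k).eval x)).trace
        = ∑ i, (hherm.eigenvalues i * Real.log (hherm.eigenvalues i)
            - (p k).eval (hherm.eigenvalues i)) := trace_cfc hherm _
    rw [htr]
    have hbd : ∀ i : Fin n, |hherm.eigenvalues i * Real.log (hherm.eigenvalues i)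
        - (p k).eval (hherm.eigenvalues i)| ≤ 1/((k:ℝ)+1) := fun i => by
      rw [abs_sub_comm]
      exact le_of_lt (hp k (hherm.eigenvalues i)
        ⟨Dset_eig_lower hA i, Dset_eig_upper hε hA i⟩)
    calc |∑ i, (hherm.eigenvalues i * Real.log (hherm.eigenvalues i)
            - (p k).eval (hherm.eigenvalues i))|
        ≤ ∑ i : Fin n, (1/((k:ℝ)+1)) :=
          le_trans (Finset.abs_sum_le_sum_abs _ _) (Finset.sum_le_sum fun i _ => hbd i)
      _ = (n:ℝ) * (1/((k:ℝ)+1)) := by simp [Finset.sum_const, mul_comm]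
      _ < δ := by
          rw [mul_one_div, div_lt_iff₀ (by positivity)]
          have hNk : ((n:ℝ) / δ) < (k:ℝ) + 1 :=
            lt_of_lt_of_le hN (by exact_mod_cast le_trans hk (Nat.le_succ k))
          calc (n:ℝ) = ((n:ℝ) / δ) * δ := by field_simp
            _ < ((k:ℝ)+1) * δ := mul_lt_mul_of_pos_right hNk hδ
            _ = δ * ((k:ℝ)+1) := mul_comm _ _
  refine key.continuousOn (Filter.Frequently.of_forall fun k => ?_)
  exact (((p k).continuous_aeval).matrix_trace).neg.continuousOn

end Continuity

section FirstOrder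
variable {ε : ℝ}

lemma first_order (hε : 0 < ε) (hε1 : ε ≤ 1) {Γ : Set (Matrix (Fin n) (Fin n) ℝ)}
    (hΓsub : Γ ⊆ Dset n ε) (hΓconv : Convex ℝ Γ)
    {ρs ρ : Matrix (Fin n) (Fin n) ℝ} (hρs : ρs ∈ Γ) (hρ : ρ ∈ Γ)
    (hmax : ∀ τ ∈ Γ, vnEntropy τ ≤ vnEntropy ρs) :
    -(ρ * matLog ρs).trace ≤ -(ρs * matLog ρs).trace := by
  set path : ℝ → Matrix (Fin n) (Fin n) ℝ := fun t => ρs + t • (ρ - ρs) with hpath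
  have hpathΓ : ∀ t ∈ Set.Icc (0:ℝ) 1, path t ∈ Γ := by
    intro t ht
    have h := hΓconv hρs hρ (by linarith [ht.2] : (0:ℝ) ≤ 1 - t) ht.1 (by ring)
    have heq : (1 - t) • ρs + t • ρ = ρs + t • (ρ - ρs) := by
      rw [sub_smul, one_smul, smul_sub]; abel
    rw [heq] at h
    exact h
  set g : ℝ → ℝ := fun t => ((ρ - ρs) * matLog (path t)).trace with hg
  have hBherm : (ρ - ρs).IsHermitian := ((hΓsub hρ).1.1).sub ((hΓsub hρs).1.1)
  have hgpos : ∀ t ∈ Set.Ioc (0:ℝ) 1, 0 ≤ g t := by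
    intro t ht
    have htΓ : path t ∈ Γ := hpathΓ t ⟨ht.1.le, ht.2⟩
    have htD : path t ∈ Dset n ε := hΓsub htΓ
    have hklein : vnEntropy ρs ≤ -(ρs * matLog (path t)).trace :=
      klein hε (hΓsub hρs) htD
    have hm : vnEntropy (path t) ≤ vnEntropy ρs := hmax _ htΓ
    have hexpand : (path t * matLog (path t)).trace
        = (ρs * matLog (path t)).trace + t * ((ρ - ρs) * matLog (path t)).trace := by
      rw [hpath]
      rw [Matrix.add_mul, Matrix.smul_mul, Matrix.trace_add, Matrix.trace_smul]
      rfl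
    have hent : vnEntropy (path t) = -(path t * matLog (path t)).trace :=
      vnEntropy_eq_trace (dset_herm htD)
    rw [hent, hexpand] at hm
    have : -t * g t ≤ 0 := by rw [hg]; simp only; linarith
    nlinarith [ht.1]
  have hcont : ContinuousOn g (Set.Icc (0:ℝ) 1) := by
    refine (cont_trace_mul_matLog hε hε1 (ρ - ρs) hBherm).comp ?_ ?_
    · exact (continuous_const.add (continuous_id.smul continuous_const)).continuousOn
    · intro t ht
      exact hΓsub (hpathΓ t ht)
  have htendsto : Filter.Tendsto g (nhdsWithin 0 (Set.Ioc (0:ℝ) 1)) (nhds (g 0)) := by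
    have h0 : (0:ℝ) ∈ Set.Icc (0:ℝ) 1 := ⟨le_refl _, zero_le_one⟩
    exact ((hcont 0 h0).mono Set.Ioc_subset_Icc_self).tendsto
  haveI : Filter.NeBot (nhdsWithin 0 (Set.Ioc (0:ℝ) 1)) :=
    left_nhdsWithin_Ioc_neBot zero_lt_one
  have h0le : 0 ≤ g 0 :=
    ge_of_tendsto htendsto (Filter.eventually_mem_set.mpr self_mem_nhdsWithin |>.mono hgpos)
  have hg0 : g 0 = (ρ * matLog ρs).trace - (ρs * matLog ρs).trace := by
    rw [hg]
    simp only [hpath, zero_smul, add_zero]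
    rw [Matrix.sub_mul, Matrix.trace_sub]
  linarith [hg0 ▸ h0le]

end FirstOrder

/-- Max-VNE as a minimax equilibrium: for ε ∈ (0, 1/n) and
Γ ⊆ D_{n,ε} nonempty, convex, compact, the quantum log loss
L_log(ρ,σ) := −Tr(ρ log σ) satisfies:
(i) inf_{σ ∈ D_{n,ε}} sup_{ρ ∈ Γ} L_log = sup_{ρ ∈ Γ} inf_{σ ∈ D_{n,ε}} L_log
    = sup_{ρ ∈ Γ} S(ρ);
(ii) there is a saddle point (ρ*, σ*) ∈ Γ × D_{n,ε} with ρ* maximizing the von Neumann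
entropy over Γ and S(ρ*) equal to the minimax value. -/
theorem maxVNE_minimax {n : ℕ} (ε : ℝ) (hε : ε ∈ Set.Ioo 0 (1 / (n : ℝ)))
    (Γ : Set (Matrix (Fin n) (Fin n) ℝ)) (hΓsub : Γ ⊆ Dset n ε)
    (hΓne : Γ.Nonempty) (hΓconv : Convex ℝ Γ) (hΓcomp : IsCompact Γ) :
    ((⨅ σ : Dset n ε, ⨆ ρ : Γ,
        -((ρ : Matrix (Fin n) (Fin n) ℝ) * matLog (σ : Matrix (Fin n) (Fin n) ℝ)).trace) =
      (⨆ ρ : Γ, ⨅ σ : Dset n ε,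
        -((ρ : Matrix (Fin n) (Fin n) ℝ) * matLog (σ : Matrix (Fin n) (Fin n) ℝ)).trace) ∧
     (⨆ ρ : Γ, ⨅ σ : Dset n ε,
        -((ρ : Matrix (Fin n) (Fin n) ℝ) * matLog (σ : Matrix (Fin n) (Fin n) ℝ)).trace) =
      (⨆ ρ : Γ, vnEntropy (ρ : Matrix (Fin n) (Fin n) ℝ))) ∧
    ∃ ρs ∈ Γ, ∃ σs ∈ Dset n ε,
      (∀ ρ ∈ Γ, -(ρ * matLog σs).trace ≤ -(ρs * matLog σs).trace) ∧
      (∀ σ ∈ Dset n ε, -(ρs * matLog σs).trace ≤ -(ρs * matLog σ).trace) ∧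
      (∀ ρ ∈ Γ, vnEntropy ρ ≤ vnEntropy ρs) ∧
      vnEntropy ρs =
        ⨅ σ : Dset n ε, ⨆ ρ : Γ,
          -((ρ : Matrix (Fin n) (Fin n) ℝ) * matLog (σ : Matrix (Fin n) (Fin n) ℝ)).trace := by
  obtain ⟨hε0, hεn⟩ := hε
  have hn : 0 < n := by
    by_contra h
    push_neg at h
    interval_cases n
    · simp at hεn; linarith
  have hε1 : ε ≤ 1 := by
    have h1 : 1/(n:ℝ) ≤ 1 := by
      rw [div_le_one (by exact_mod_cast hn)]
      exact_mod_cast hn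
    linarith
  obtain ⟨ρ₀, hρ₀⟩ := hΓne
  haveI : Nonempty Γ := ⟨⟨ρ₀, hρ₀⟩⟩
  haveI : Nonempty (Dset n ε) := ⟨⟨ρ₀, hΓsub hρ₀⟩⟩
  -- maximizer of entropy
  obtain ⟨ρs, hρsΓ, hρsmax⟩ := hΓcomp.exists_isMaxOn ⟨ρ₀, hρ₀⟩
    ((cont_vnEntropy hε0 hε1).mono hΓsub)
  have hmax : ∀ ρ ∈ Γ, vnEntropy ρ ≤ vnEntropy ρs := fun ρ hρ => hρsmax hρ
  have hρsD : ρs ∈ Dset n ε := hΓsub hρsΓ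
  have hSρs : vnEntropy ρs = -(ρs * matLog ρs).trace := vnEntropy_eq_trace hρsD.1.1
  have saddle_a : ∀ ρ ∈ Γ, -(ρ * matLog ρs).trace ≤ -(ρs * matLog ρs).trace :=
    fun ρ hρ => first_order hε0 hε1 hΓsub hΓconv hρsΓ hρ hmax
  have saddle_b : ∀ σ ∈ Dset n ε, -(ρs * matLog ρs).trace ≤ -(ρs * matLog σ).trace :=
    fun σ hσ => hSρs ▸ klein hε0 hρsD hσ
  -- inner infimum equals entropy
  have hbddF : ∀ ρ : Γ, BddBelow (Set.range fun σ : Dset n ε =>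
      -((ρ : Matrix (Fin n) (Fin n) ℝ) * matLog (σ : Matrix (Fin n) (Fin n) ℝ)).trace) := by
    intro ρ
    exact ⟨0, fun y hy => by
      obtain ⟨σ, rfl⟩ := hy
      exact L_nonneg hε0 (hΓsub ρ.2) σ.2⟩
  have hinner : ∀ ρ : Γ, (⨅ σ : Dset n ε,
      -((ρ : Matrix (Fin n) (Fin n) ℝ) * matLog (σ : Matrix (Fin n) (Fin n) ℝ)).trace)
      = vnEntropy (ρ : Matrix (Fin n) (Fin n) ℝ) := by
    intro ρ
    refine le_antisymm ?_ (le_ciInf fun σ => klein hε0 (hΓsub ρ.2) σ.2)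
    exact (ciInf_le (hbddF ρ) ⟨ρ, hΓsub ρ.2⟩).trans_eq
      (vnEntropy_eq_trace (hΓsub ρ.2).1.1).symm
  -- sup of entropy is attained at ρs
  have hbddS : BddAbove (Set.range fun ρ : Γ => vnEntropy (ρ : Matrix (Fin n) (Fin n) ℝ)) :=
    ⟨vnEntropy ρs, fun y hy => by obtain ⟨ρ, rfl⟩ := hy; exact hmax _ ρ.2⟩
  have hsupS : (⨆ ρ : Γ, vnEntropy (ρ : Matrix (Fin n) (Fin n) ℝ)) = vnEntropy ρs :=
    le_antisymm (ciSup_le fun ρ => hmax _ ρ.2) (le_ciSup hbddS ⟨ρs, hρsΓ⟩)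
  -- bddAbove of ρ ↦ L(ρ,σ) for each σ
  have hbddA : ∀ σ : Dset n ε, BddAbove (Set.range fun ρ : Γ =>
      -((ρ : Matrix (Fin n) (Fin n) ℝ) * matLog (σ : Matrix (Fin n) (Fin n) ℝ)).trace) := by
    intro σ
    exact ⟨-Real.log ε, fun y hy => by
      obtain ⟨ρ, rfl⟩ := hy
      exact L_le hε0 (hΓsub ρ.2) σ.2⟩
  -- the outer inf-sup equals vnEntropy ρs
  have houter : (⨅ σ : Dset n ε, ⨆ ρ : Γ,
      -((ρ : Matrix (Fin n) (Fin n) ℝ) * matLog (σ : Matrix (Fin n) (Fin n) ℝ)).trace)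
      = vnEntropy ρs := by
    refine le_antisymm ?_ ?_
    · refine (ciInf_le ?_ ⟨ρs, hρsD⟩).trans ?_
      · exact ⟨0, fun y hy => by
          obtain ⟨σ, rfl⟩ := hy
          exact le_trans (L_nonneg hε0 (hΓsub hρ₀) σ.2)
            (le_ciSup (hbddA σ) (⟨ρ₀, hρ₀⟩ : Γ))⟩
      · refine ciSup_le fun ρ => ?_
        exact (saddle_a _ ρ.2).trans_eq hSρs.symm
    · refine le_ciInf fun σ => ?_
      calc vnEntropy ρs ≤ -(ρs * matLog (σ : Matrix (Fin n) (Fin n) ℝ)).trace :=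
            klein hε0 hρsD σ.2
        _ ≤ _ := le_ciSup (hbddA σ) (⟨ρs, hρsΓ⟩ : Γ)
  have hsupinf : (⨆ ρ : Γ, ⨅ σ : Dset n ε,
      -((ρ : Matrix (Fin n) (Fin n) ℝ) * matLog (σ : Matrix (Fin n) (Fin n) ℝ)).trace)
      = (⨆ ρ : Γ, vnEntropy (ρ : Matrix (Fin n) (Fin n) ℝ)) :=
    iSup_congr hinner
  refine ⟨⟨?_, hsupinf⟩, ρs, hρsΓ, ρs, hρsD, saddle_a, saddle_b, hmax, houter.symm⟩
  rw [houter, hsupinf, hsupS]
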